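/- There exists a constant C > 0 such that for every real k ≥ 2, ∫_{k^{1/3}}^{k − k^{4/9}} 1/η(k,ν) dν ≤ C·k^{5/18}·log k. -/

import Mathlib

open Real

/-- The phase function `η(k,ν) = √(k²-ν²) - ν·arccos(ν/k)`. -/
noncomputable def eta (k ν : ℝ) : ℝ :=
  Real.sqrt (k ^ 2 - ν ^ 2) - ν * Real.arccos (ν / k)

lemma continuous_eta (k : ℝ) : Continuous (fun ν => eta k ν) := by
  unfold eta
  exact (Real.continuous_sqrt.comp (by continuity)).sub
    (continuous_id.mul (Real.continuous_arccos.comp (continuous_id.div_const k)))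

lemma sqrt_one_sub_le_arccos {x : ℝ} (h1 : -1 ≤ x) (h2 : x ≤ 1) :
    Real.sqrt (1 - x) ≤ Real.arccos x := by
  have ha : 0 ≤ Real.arccos x := Real.arccos_nonneg x
  have hc : Real.cos (Real.arccos x) = x := Real.cos_arccos h1 h2
  have hb : 1 - (Real.arccos x) ^ 2 / 2 ≤ x := by
    have := Real.one_sub_sq_div_two_le_cos (x := Real.arccos x)
    rwa [hc] at this
  have hx : 1 - x ≤ (Real.arccos x) ^ 2 := by nlinarith
  calc Real.sqrt (1 - x) ≤ Real.sqrt ((Real.arccos x) ^ 2) := Real.sqrt_le_sqrt hx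
    _ = Real.arccos x := by rw [Real.sqrt_sq ha]

lemma eta_eq_integral {k ν : ℝ} (hk : 0 < k) (hν0 : 0 ≤ ν) (hνk : ν ≤ k) :
    eta k ν = ∫ s in ν..k, Real.arccos (s / k) := by
  have hcont : ContinuousOn (fun s => -eta k s) (Set.Icc ν k) :=
    ((continuous_eta k).neg).continuousOn
  have hint : IntervalIntegrable (fun s => Real.arccos (s / k)) MeasureTheory.volume ν k :=
    (Real.continuous_arccos.comp (continuous_id.div_const k)).intervalIntegrable _ _
  have hderiv : ∀ s ∈ Set.Ioo ν k, HasDerivWithinAt (fun s => -eta k s)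
      (Real.arccos (s / k)) (Set.Ioi s) s := by
    intro s hs
    have hs0 : 0 < s := lt_of_le_of_lt hν0 hs.1
    have hsk : s < k := hs.2
    have hE : 0 < k ^ 2 - s ^ 2 := by nlinarith
    have hdk : s / k < 1 := (div_lt_one hk).mpr hsk
    have hdk0 : 0 < s / k := div_pos hs0 hk
    -- derivative of sqrt (k^2 - s^2)
    have h1 : HasDerivAt (fun s : ℝ => k ^ 2 - s ^ 2) (0 - 2 * s) s := by
      have : HasDerivAt (fun s : ℝ => k ^ 2 - s ^ 2) (0 - ((2 : ℕ) : ℝ) * s ^ (2 - 1)) s :=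
        (hasDerivAt_const s (k ^ 2)).sub (hasDerivAt_pow 2 s)
      simpa using this
    have h2 : HasDerivAt (fun s : ℝ => Real.sqrt (k ^ 2 - s ^ 2))
        (1 / (2 * Real.sqrt (k ^ 2 - s ^ 2)) * (0 - 2 * s)) s :=
      (Real.hasDerivAt_sqrt (ne_of_gt hE)).comp s h1
    -- derivative of arccos (s / k)
    have h3 : HasDerivAt (fun s : ℝ => s / k) (1 / k) s := by
      simpa using (hasDerivAt_id s).div_const k
    have h4 : HasDerivAt (fun s : ℝ => Real.arccos (s / k))
        (-(1 / Real.sqrt (1 - (s / k) ^ 2)) * (1 / k)) s :=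
      by have := (Real.hasDerivAt_arccos (by linarith) (ne_of_lt hdk)).comp s h3; exact this
    have h5 : HasDerivAt (fun s : ℝ => s * Real.arccos (s / k))
        (1 * Real.arccos (s / k) + s * (-(1 / Real.sqrt (1 - (s / k) ^ 2)) * (1 / k))) s :=
      (hasDerivAt_id s).mul h4
    have h6 : HasDerivAt (fun s : ℝ => -eta k s)
        (-(1 / (2 * Real.sqrt (k ^ 2 - s ^ 2)) * (0 - 2 * s) -
          (1 * Real.arccos (s / k) + s * (-(1 / Real.sqrt (1 - (s / k) ^ 2)) * (1 / k))))) s := by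
      have := (h2.sub h5).neg
      exact this
    have hkey : Real.sqrt (1 - (s / k) ^ 2) * k = Real.sqrt (k ^ 2 - s ^ 2) := by
      have h7 : 1 - (s / k) ^ 2 = (k ^ 2 - s ^ 2) / k ^ 2 := by
        field_simp
      rw [h7, Real.sqrt_div hE.le, Real.sqrt_sq hk.le]
      field_simp
    have hsE : 0 < Real.sqrt (k ^ 2 - s ^ 2) := Real.sqrt_pos.mpr hE
    have heq : -(1 / (2 * Real.sqrt (k ^ 2 - s ^ 2)) * (0 - 2 * s) -
          (1 * Real.arccos (s / k) + s * (-(1 / Real.sqrt (1 - (s / k) ^ 2)) * (1 / k)))) =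
        Real.arccos (s / k) := by
      have hsq1 : 0 < Real.sqrt (1 - (s / k) ^ 2) := by
        apply Real.sqrt_pos.mpr; nlinarith
      generalize Real.sqrt (1 - (s / k) ^ 2) = q at hkey hsq1 ⊢
      field_simp
      nlinarith [hkey, hsq1, hsE]
    rw [heq] at h6
    exact h6.hasDerivWithinAt
  have := intervalIntegral.integral_eq_sub_of_hasDeriv_right_of_le hνk hcont hderiv hint
  rw [this]
  have hetak : eta k k = 0 := by
    simp [eta, div_self (ne_of_gt hk), Real.arccos_one]
  rw [hetak]
  ring

lemma rpow_three_halves_eq {x : ℝ} (hx : 0 ≤ x) :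
    x ^ ((3 : ℝ) / 2) = x * Real.sqrt x := by
  calc x ^ ((3 : ℝ) / 2) = x ^ ((1 : ℝ) + 1 / 2) := by norm_num
    _ = x ^ (1 : ℝ) * x ^ ((1 : ℝ) / 2) := Real.rpow_add' hx (by norm_num)
    _ = x * Real.sqrt x := by rw [Real.rpow_one, Real.sqrt_eq_rpow]

lemma eta_lower {k ν : ℝ} (hk : 0 < k) (hν0 : 0 ≤ ν) (hνk : ν ≤ k) :
    2 / 3 * (k - ν) ^ ((3 : ℝ) / 2) / Real.sqrt k ≤ eta k ν := by
  rw [eta_eq_integral hk hν0 hνk]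
  have key : ∫ s in ν..k, Real.sqrt (k - s) / Real.sqrt k ≤
      ∫ s in ν..k, Real.arccos (s / k) := by
    apply intervalIntegral.integral_mono_on hνk
    · exact ((Real.continuous_sqrt.comp (by continuity)).div_const _).intervalIntegrable _ _
    · exact (Real.continuous_arccos.comp (continuous_id.div_const k)).intervalIntegrable _ _
    · intro s hs
      have hs0 : 0 ≤ s := le_trans hν0 hs.1
      have hsk : s ≤ k := hs.2
      have h1 : Real.sqrt (1 - s / k) ≤ Real.arccos (s / k) :=
        sqrt_one_sub_le_arccos (by linarith [div_nonneg hs0 hk.le]) ((div_le_one hk).mpr hsk)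
      have h2 : 1 - s / k = (k - s) / k := by field_simp
      calc Real.sqrt (k - s) / Real.sqrt k = Real.sqrt ((k - s) / k) := by
            rw [Real.sqrt_div (by linarith)]
        _ = Real.sqrt (1 - s / k) := by rw [h2]
        _ ≤ Real.arccos (s / k) := h1
  have hcomp : (∫ s in ν..k, Real.sqrt (k - s)) = ∫ x in (0 : ℝ)..(k - ν), Real.sqrt x := by
    have := intervalIntegral.integral_comp_sub_left (fun x => Real.sqrt x) k (a := ν) (b := k)
    simpa using this
  have hval : (∫ x in (0 : ℝ)..(k - ν), Real.sqrt x) = 2 / 3 * (k - ν) ^ ((3 : ℝ) / 2) := by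
    have hKν : 0 ≤ k - ν := by linarith
    have hcongr : (∫ x in (0 : ℝ)..(k - ν), Real.sqrt x) =
        ∫ x in (0 : ℝ)..(k - ν), x ^ ((1 : ℝ) / 2) := by
      apply intervalIntegral.integral_congr
      intro x hx
      exact Real.sqrt_eq_rpow x
    rw [hcongr, integral_rpow (Or.inl (by norm_num))]
    rw [Real.zero_rpow (by norm_num)]
    have : (1 : ℝ) / 2 + 1 = 3 / 2 := by norm_num
    rw [this]
    ring
  have hdiv : (∫ s in ν..k, Real.sqrt (k - s) / Real.sqrt k) =
      (∫ s in ν..k, Real.sqrt (k - s)) / Real.sqrt k := by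
    rw [intervalIntegral.integral_div]
  refine le_trans (le_of_eq ?_) key
  rw [hdiv, hcomp, hval]

lemma eta_pos {k ν : ℝ} (hk : 0 < k) (hν0 : 0 ≤ ν) (hνk : ν < k) : 0 < eta k ν := by
  refine lt_of_lt_of_le ?_ (eta_lower hk hν0 hνk.le)
  have : (0 : ℝ) < k - ν := by linarith
  positivity

/-- `∫_{k^{1/3}}^{k-k^{4/9}} dν/η(k,ν) = O(k^{5/18} log k)`. -/
theorem integral_inv_eta_bound :
    ∃ C > (0 : ℝ), ∀ k : ℝ, 2 ≤ k →
      (∫ ν in (k ^ ((1 : ℝ) / 3))..(k - k ^ ((4 : ℝ) / 9)), 1 / eta k ν)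
        ≤ C * k ^ ((5 : ℝ) / 18) * Real.log k := by
  refine ⟨5, by norm_num, fun k hk => ?_⟩
  have hk0 : (0 : ℝ) < k := by linarith
  have hk1 : (1 : ℝ) < k := by linarith
  set a := k ^ ((1 : ℝ) / 3) with ha_def
  set b := k - k ^ ((4 : ℝ) / 9) with hb_def
  have ha0 : 0 < a := Real.rpow_pos_of_pos hk0 _
  have h49 : k ^ ((4 : ℝ) / 9) < k := by
    calc k ^ ((4 : ℝ) / 9) < k ^ (1 : ℝ) :=
          Real.rpow_lt_rpow_of_exponent_lt hk1 (by norm_num)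
      _ = k := Real.rpow_one k
  have h13 : a < k := by
    calc a < k ^ (1 : ℝ) := Real.rpow_lt_rpow_of_exponent_lt hk1 (by norm_num)
      _ = k := Real.rpow_one k
  have hb0 : 0 < b := by
    rw [hb_def]; linarith
  have hbk : b < k := by
    have : 0 < k ^ ((4 : ℝ) / 9) := Real.rpow_pos_of_pos hk0 _
    rw [hb_def]; linarith
  have hlog : 0 < Real.log k := Real.log_pos hk1
  have hkr : 0 < k ^ ((5 : ℝ) / 18) := Real.rpow_pos_of_pos hk0 _
  by_cases hab : a ≤ b
  · -- main case
    have hKb : k - b = k ^ ((4 : ℝ) / 9) := by rw [hb_def]; ring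
    have hKb0 : 0 < k - b := by rw [hKb]; positivity
    have hKa0 : 0 < k - a := by linarith
    set C2 : ℝ := 3 / 2 * Real.sqrt k with hC2
    have hsk : 0 < Real.sqrt k := Real.sqrt_pos.mpr hk0
    have hC2pos : 0 < C2 := by positivity
    -- pointwise bound on [a, b]
    have hptwise : ∀ ν ∈ Set.Icc a b, 1 / eta k ν ≤ C2 * (k - ν) ^ (-(3 : ℝ) / 2) := by
      intro ν hν
      have hν0 : 0 ≤ ν := le_trans ha0.le hν.1
      have hνk : ν < k := lt_of_le_of_lt hν.2 hbk
      have hKν : 0 < k - ν := by linarith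
      have hlow := eta_lower hk0 hν0 hνk.le
      have hLpos : 0 < 2 / 3 * (k - ν) ^ ((3 : ℝ) / 2) / Real.sqrt k := by positivity
      have h1 : 1 / eta k ν ≤ 1 / (2 / 3 * (k - ν) ^ ((3 : ℝ) / 2) / Real.sqrt k) :=
        one_div_le_one_div_of_le hLpos hlow
      refine h1.trans (le_of_eq ?_)
      have hneg : (k - ν) ^ (-(3 : ℝ) / 2) = ((k - ν) ^ ((3 : ℝ) / 2))⁻¹ := by
        rw [show (-(3 : ℝ) / 2) = -((3 : ℝ) / 2) by ring, Real.rpow_neg hKν.le]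
      rw [hneg, hC2]
      have hr : (0 : ℝ) < (k - ν) ^ ((3 : ℝ) / 2) := Real.rpow_pos_of_pos hKν _
      field_simp
    -- integrability
    have hetacont : ContinuousOn (fun ν => 1 / eta k ν) (Set.uIcc a b) := by
      rw [Set.uIcc_of_le hab]
      apply ContinuousOn.div continuousOn_const (continuous_eta k).continuousOn
      intro ν hν
      exact ne_of_gt (eta_pos hk0 (le_trans ha0.le hν.1) (lt_of_le_of_lt hν.2 hbk))
    have hint1 : IntervalIntegrable (fun ν => 1 / eta k ν) MeasureTheory.volume a b :=
      hetacont.intervalIntegrable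
    have hgcont : ContinuousOn (fun ν => C2 * (k - ν) ^ (-(3 : ℝ) / 2)) (Set.uIcc a b) := by
      apply ContinuousOn.mul continuousOn_const
      have hc : Continuous (fun ν : ℝ => k - ν) := by continuity
      apply ContinuousOn.rpow_const hc.continuousOn
      intro ν hν
      rw [Set.uIcc_of_le hab] at hν
      exact Or.inl (ne_of_gt (by linarith [lt_of_le_of_lt hν.2 hbk] : (0:ℝ) < k - ν))
    have hint2 : IntervalIntegrable (fun ν => C2 * (k - ν) ^ (-(3 : ℝ) / 2))
        MeasureTheory.volume a b := hgcont.intervalIntegrable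
    have hmono := intervalIntegral.integral_mono_on hab hint1 hint2 hptwise
    -- compute the integral of the majorant
    have hval : (∫ ν in a..b, C2 * (k - ν) ^ (-(3 : ℝ) / 2)) =
        C2 * (((k - a) ^ (-(1 : ℝ) / 2) - (k - b) ^ (-(1 : ℝ) / 2)) / (-(1 : ℝ) / 2)) := by
      rw [intervalIntegral.integral_const_mul]
      congr 1
      have hcomp : (∫ ν in a..b, (k - ν) ^ (-(3 : ℝ) / 2)) =
          ∫ x in (k - b)..(k - a), x ^ (-(3 : ℝ) / 2) := by
        have := intervalIntegral.integral_comp_sub_left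
          (fun x => x ^ (-(3 : ℝ) / 2)) k (a := a) (b := b)
        simpa using this
      have hne : (0 : ℝ) ∉ Set.uIcc (k - b) (k - a) := by
        intro hmem
        rcases Set.mem_uIcc.mp hmem with h | h
        · linarith [h.1, hKb0]
        · linarith [h.1, hKa0]
      rw [hcomp, integral_rpow (Or.inr ⟨by norm_num, hne⟩)]
      norm_num
    have hbound : C2 * (((k - a) ^ (-(1 : ℝ) / 2) - (k - b) ^ (-(1 : ℝ) / 2)) / (-(1 : ℝ) / 2))
        ≤ 3 * k ^ ((5 : ℝ) / 18) := by
      have hKa : 0 ≤ (k - a) ^ (-(1 : ℝ) / 2) := Real.rpow_nonneg hKa0.le _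
      have heq : C2 * (((k - a) ^ (-(1 : ℝ) / 2) - (k - b) ^ (-(1 : ℝ) / 2)) / (-(1 : ℝ) / 2)) =
          2 * C2 * ((k - b) ^ (-(1 : ℝ) / 2) - (k - a) ^ (-(1 : ℝ) / 2)) := by ring
      rw [heq]
      have hKbval : (k - b) ^ (-(1 : ℝ) / 2) = k ^ (-(2 : ℝ) / 9) := by
        rw [hKb, ← Real.rpow_mul hk0.le]
        norm_num
      have hfinal : 2 * C2 * (k - b) ^ (-(1 : ℝ) / 2) = 3 * k ^ ((5 : ℝ) / 18) := by
        rw [hKbval, hC2, Real.sqrt_eq_rpow]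
        rw [show (2 : ℝ) * (3 / 2 * k ^ ((1:ℝ)/2)) * k ^ (-(2:ℝ)/9) =
          3 * (k ^ ((1:ℝ)/2) * k ^ (-(2:ℝ)/9)) by ring, ← Real.rpow_add hk0]
        norm_num
      nlinarith [hKa, hC2pos]
    have hlast : 3 * k ^ ((5 : ℝ) / 18) ≤ 5 * k ^ ((5 : ℝ) / 18) * Real.log k := by
      have hl2 : Real.log 2 ≤ Real.log k := Real.log_le_log (by norm_num) hk
      have : (0.6931471803 : ℝ) < Real.log 2 := Real.log_two_gt_d9
      nlinarith [hkr]
    calc (∫ ν in a..b, 1 / eta k ν) ≤ ∫ ν in a..b, C2 * (k - ν) ^ (-(3 : ℝ) / 2) := hmono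
      _ = C2 * (((k - a) ^ (-(1 : ℝ) / 2) - (k - b) ^ (-(1 : ℝ) / 2)) / (-(1 : ℝ) / 2)) := hval
      _ ≤ 3 * k ^ ((5 : ℝ) / 18) := hbound
      _ ≤ 5 * k ^ ((5 : ℝ) / 18) * Real.log k := hlast
  · -- degenerate case b < a : the integral is ≤ 0
    push_neg at hab
    have hnn : 0 ≤ ∫ ν in b..a, 1 / eta k ν := by
      apply intervalIntegral.integral_nonneg hab.le
      intro u hu
      have hu0 : 0 ≤ u := le_trans hb0.le hu.1
      have huk : u < k := lt_of_le_of_lt hu.2 h13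
      exact le_of_lt (one_div_pos.mpr (eta_pos hk0 hu0 huk))
    rw [intervalIntegral.integral_symm]
    have : (0 : ℝ) ≤ 5 * k ^ ((5 : ℝ) / 18) * Real.log k := by positivity
    linarith
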